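/- Let R be a discrete valuation ring with maximal ideal 𝔪 and finite residue field of odd cardinality q, and let u ∈ Rˣ be a unit whose image in the residue field is not a square. Let T = {!![a, u·b; b, a] : a, b ∈ R} ∩ GL₂(R) (the unit group of the unramified quadratic order; a matrix of this shape lies in GL₂(R) exactly when a² − u·b² ∈ Rˣ), a subgroup of GL₂(R). For j ≥ 1 let K^j = {g ∈ GL₂(R) : every entry of g − 1 lies in 𝔪^j}. Then for every i ≥ 1, the set T·K^i is a subgroup of GL₂(R) (since K^i is normal), and its index in GL₂(R) equals (q² − q)·q^{2(i−1)}. -/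

import Mathlib

open IsLocalRing Matrix Pointwise

/-- The congruence subgroup of `GL₂(R)` attached to an ideal `I`: the invertible matrices
`g` with every entry of `g - 1` in `I`. -/
def congruenceSubgroup (R : Type*) [CommRing R] (I : Ideal R) :
    Subgroup (GL (Fin 2) R) where
  carrier := {g : GL (Fin 2) R |
    ∀ r s : Fin 2, ((g : Matrix (Fin 2) (Fin 2) R) - 1) r s ∈ I}
  one_mem' := by
    intro r s
    simp
  mul_mem' := by
    intro a b ha hb r s
    have key : ((↑(a * b) : Matrix (Fin 2) (Fin 2) R) - 1)
        = (↑a : Matrix (Fin 2) (Fin 2) R) * ((↑b : Matrix (Fin 2) (Fin 2) R) - 1)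
          + ((↑a : Matrix (Fin 2) (Fin 2) R) - 1) := by
      rw [Matrix.GeneralLinearGroup.coe_mul]
      noncomm_ring
    rw [key, Matrix.add_apply, Matrix.mul_apply]
    exact add_mem (Ideal.sum_mem _ fun k _ => Ideal.mul_mem_left _ _ (hb k s)) (ha r s)
  inv_mem' := by
    intro a ha r s
    have h : (↑(a⁻¹) : Matrix (Fin 2) (Fin 2) R) * (↑a : Matrix (Fin 2) (Fin 2) R) = 1 := by
      rw [← Matrix.GeneralLinearGroup.coe_mul, inv_mul_cancel,
        Matrix.GeneralLinearGroup.coe_one]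
    have key : ((↑(a⁻¹) : Matrix (Fin 2) (Fin 2) R) - 1)
        = -((↑(a⁻¹) : Matrix (Fin 2) (Fin 2) R)
            * ((↑a : Matrix (Fin 2) (Fin 2) R) - 1)) := by
      rw [mul_sub, h, mul_one, neg_sub]
    rw [key, Matrix.neg_apply, Matrix.mul_apply]
    exact neg_mem (Ideal.sum_mem _ fun k _ => Ideal.mul_mem_left _ _ (ha k s))

/-- The unit group of the unramified quadratic order inside `GL₂(R)`: invertible matrices
of the shape `!![a, u·b; b, a]`. -/
def unramifiedTorus (R : Type*) [CommRing R] (u : Rˣ) : Set (GL (Fin 2) R) :=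
  {g : GL (Fin 2) R |
    ∃ a b : R, (g : Matrix (Fin 2) (Fin 2) R) = !![a, (u : R) * b; b, a]}

section CardPreimage

variable {M N : Type*} [AddCommGroup M] [AddCommGroup N]

noncomputable def preimageEquiv (f : M →+ N) (hf : Function.Surjective f) (s : Set N) :
    (f ⁻¹' s) ≃ s × (f ⁻¹' ({0} : Set N)) where
  toFun x := ⟨⟨f x.1, x.2⟩, ⟨x.1 - Function.surjInv hf (f x.1), by
    simp [Set.mem_preimage, Function.surjInv_eq hf]⟩⟩
  invFun p := ⟨Function.surjInv hf p.1.1 + p.2.1, by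
    have h2 : f p.2.1 = 0 := p.2.2
    simp [Set.mem_preimage, Function.surjInv_eq hf, h2, p.1.2]⟩
  left_inv x := by
    ext
    simp
  right_inv p := by
    have h2 : f p.2.1 = 0 := p.2.2
    ext
    · simp [Function.surjInv_eq hf, h2]
    · simp [Function.surjInv_eq hf, h2, add_sub_cancel_left]

lemma card_preimage (f : M →+ N) (hf : Function.Surjective f) (s : Set N) :
    Nat.card (f ⁻¹' s) = Nat.card s * Nat.card (f ⁻¹' ({0} : Set N)) := by
  rw [Nat.card_congr (preimageEquiv f hf s), Nat.card_prod]

end CardPreimage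

noncomputable def unitsEquivIsUnit (M : Type*) [Monoid M] : Mˣ ≃ {x : M // IsUnit x} :=
  Equiv.ofBijective (fun u => ⟨↑u, u.isUnit⟩)
    ⟨fun u v h => Units.ext (congrArg Subtype.val h),
     fun x => by
      obtain ⟨u, hu⟩ := x.2
      exact ⟨u, Subtype.ext hu⟩⟩

section GLmap

variable {R S : Type*} [CommRing R] [CommRing S]

lemma GL_map_surjective (f : R →+* S) (hf : Function.Surjective f)
    (hloc : ∀ x, IsUnit (f x) → IsUnit x) :
    Function.Surjective (Matrix.GeneralLinearGroup.map (n := Fin 2) f) := by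
  intro g
  set M : Matrix (Fin 2) (Fin 2) R := Matrix.of fun r s => Function.surjInv hf ((g : Matrix (Fin 2) (Fin 2) S) r s) with hM
  have hmap : M.map f = (g : Matrix (Fin 2) (Fin 2) S) := by
    ext r s
    simp [hM, Matrix.map_apply, Function.surjInv_eq hf]
  have hdet : IsUnit M.det := by
    apply hloc
    rw [RingHom.map_det]
    rw [show f.mapMatrix M = M.map f from rfl, hmap]
    exact (Matrix.isUnit_iff_isUnit_det _).mp g.isUnit
  have hMunit : IsUnit M := (Matrix.isUnit_iff_isUnit_det _).mpr hdet
  refine ⟨hMunit.unit, ?_⟩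
  ext1
  show (hMunit.unit : Matrix (Fin 2) (Fin 2) R).map f = _
  rw [IsUnit.unit_spec, hmap]

lemma ker_GL_map (f : R →+* S) {I : Ideal R} (hker : ∀ x, f x = 0 ↔ x ∈ I) :
    (Matrix.GeneralLinearGroup.map (n := Fin 2) f).ker = congruenceSubgroup R I := by
  ext g
  constructor
  · intro hg r s
    have h : ((Matrix.GeneralLinearGroup.map (n := Fin 2) f g) : Matrix (Fin 2) (Fin 2) S) = 1 := by
      rw [MonoidHom.mem_ker.mp hg]; rfl
    have h2 : (g : Matrix (Fin 2) (Fin 2) R).map f = 1 := h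
    rw [← hker]
    have := congrFun (congrFun h2 r) s
    simp only [Matrix.map_apply] at this
    rw [Matrix.sub_apply, map_sub, this]
    fin_cases r <;> fin_cases s <;> simp [Matrix.one_apply]
  · intro hg
    rw [MonoidHom.mem_ker]
    ext1
    show (g : Matrix (Fin 2) (Fin 2) R).map f = 1
    ext r s
    have h0 : f (((g : Matrix (Fin 2) (Fin 2) R) - 1) r s) = 0 := (hker _).mpr (hg r s)
    rw [Matrix.sub_apply, map_sub, sub_eq_zero] at h0
    rw [Matrix.map_apply, h0]
    fin_cases r <;> fin_cases s <;> simp [Matrix.one_apply]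

end GLmap

section Torus

variable (R : Type*) [CommRing R]

/-- The unramified torus as a subgroup. -/
def torusSubgroup (u : Rˣ) : Subgroup (GL (Fin 2) R) where
  carrier := unramifiedTorus R u
  one_mem' := ⟨1, 0, by
    ext r s
    fin_cases r <;> fin_cases s <;> simp⟩
  mul_mem' := by
    rintro g h ⟨a, b, hg⟩ ⟨c, d, hh⟩
    refine ⟨a * c + (u : R) * (b * d), a * d + b * c, ?_⟩
    have : ((g * h : GL (Fin 2) R) : Matrix (Fin 2) (Fin 2) R)
        = (g : Matrix (Fin 2) (Fin 2) R) * (h : Matrix (Fin 2) (Fin 2) R) := rfl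
    rw [this, hg, hh]
    ext r s
    fin_cases r <;> fin_cases s <;>
      simp [Matrix.mul_apply, Fin.sum_univ_two] <;> ring
  inv_mem' := by
    rintro g ⟨a, b, hg⟩
    have hdet2 : IsUnit (a * a - (u : R) * b * b) := by
      have h := (Matrix.isUnit_iff_isUnit_det _).mp g.isUnit
      rwa [hg, Matrix.det_fin_two_of] at h
    obtain ⟨v, hv1⟩ := hdet2.exists_right_inv
    refine ⟨a * v, -(b * v), ?_⟩
    have hcoe : ((g⁻¹ : GL (Fin 2) R) : Matrix (Fin 2) (Fin 2) R)
        = (g : Matrix (Fin 2) (Fin 2) R)⁻¹ := by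
      rw [← Matrix.coe_units_inv]
    rw [hcoe]
    apply Matrix.inv_eq_right_inv
    rw [hg]
    ext r s
    fin_cases r <;> fin_cases s <;>
      simp [Matrix.mul_apply, Fin.sum_univ_two, Matrix.one_apply] <;>
      (first | ring1 | linear_combination hv1)

@[simp] lemma torusSubgroup_coe (u : Rˣ) :
    (torusSubgroup R u : Set (GL (Fin 2) R)) = unramifiedTorus R u := Set.ext fun _ => Iff.rfl

end Torus

section TorusMap

variable {R S : Type*} [CommRing R] [CommRing S]

lemma map_torusSubgroup (f : R →+* S) (hf : Function.Surjective f)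
    (hloc : ∀ x, IsUnit (f x) → IsUnit x) (u : Rˣ) :
    Subgroup.map (Matrix.GeneralLinearGroup.map (n := Fin 2) f) (torusSubgroup R u)
      = torusSubgroup S (Units.map (f : R →* S) u) := by
  ext g
  constructor
  · rintro ⟨h, ⟨a, b, hh⟩, rfl⟩
    refine ⟨f a, f b, ?_⟩
    show (h : Matrix (Fin 2) (Fin 2) R).map f = _
    rw [hh]
    ext r s
    fin_cases r <;> fin_cases s <;> simp [Matrix.map_apply]
  · rintro ⟨α, β, hg⟩
    set a := Function.surjInv hf α with ha
    set b := Function.surjInv hf β with hb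
    have hfa : f a = α := Function.surjInv_eq hf α
    have hfb : f b = β := Function.surjInv_eq hf β
    set M : Matrix (Fin 2) (Fin 2) R := !![a, (u : R) * b; b, a] with hM
    have hmap : M.map f = (g : Matrix (Fin 2) (Fin 2) S) := by
      rw [hg, hM]
      ext r s
      fin_cases r <;> fin_cases s <;> simp [Matrix.map_apply, hfa, hfb]
    have hMunit : IsUnit M := by
      rw [Matrix.isUnit_iff_isUnit_det]
      apply hloc
      rw [RingHom.map_det, show f.mapMatrix M = M.map f from rfl, hmap]
      exact (Matrix.isUnit_iff_isUnit_det _).mp g.isUnit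
    refine ⟨hMunit.unit, ⟨a, b, by rw [IsUnit.unit_spec]⟩, ?_⟩
    ext1
    show (hMunit.unit : Matrix (Fin 2) (Fin 2) R).map f = _
    rw [IsUnit.unit_spec, hmap]

end TorusMap

section TorusPairs

variable (R : Type*) [CommRing R]

noncomputable def pairsEquivTorus (u : Rˣ) :
    {p : R × R // IsUnit (p.1 * p.1 - (u : R) * p.2 * p.2)} ≃ (torusSubgroup R u) := by
  have hmat : ∀ p : {p : R × R // IsUnit (p.1 * p.1 - (u : R) * p.2 * p.2)},
      IsUnit !![p.1.1, (u : R) * p.1.2; p.1.2, p.1.1] := fun p => by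
    rw [Matrix.isUnit_iff_isUnit_det, Matrix.det_fin_two_of]
    exact p.2
  refine Equiv.ofBijective
    (fun p => ⟨(hmat p).unit, ⟨p.1.1, p.1.2, by rw [IsUnit.unit_spec]⟩⟩) ⟨?_, ?_⟩
  · intro p q h
    have h2 : ((hmat p).unit : Matrix (Fin 2) (Fin 2) R)
        = ((hmat q).unit : Matrix (Fin 2) (Fin 2) R) := by
      have := congrArg Subtype.val h
      exact congrArg Units.val this
    rw [IsUnit.unit_spec, IsUnit.unit_spec] at h2
    have h00 := congrFun (congrFun h2 0) 0
    have h10 := congrFun (congrFun h2 1) 0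
    simp at h00 h10
    exact Subtype.ext (Prod.ext h00 h10)
  · rintro ⟨g, a, b, hg⟩
    have hdet : IsUnit (a * a - (u : R) * b * b) := by
      have h := (Matrix.isUnit_iff_isUnit_det _).mp g.isUnit
      rwa [hg, Matrix.det_fin_two_of] at h
    refine ⟨⟨(a, b), hdet⟩, ?_⟩
    apply Subtype.ext
    apply Units.ext
    rw [IsUnit.unit_spec]
    exact hg.symm

end TorusPairs

section DVRQuot

open IsLocalRing

variable (R : Type*) [CommRing R] [IsDomain R] [IsDiscreteValuationRing R]

lemma equiv_ideal_map_pow (j n : ℕ) :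
    Nonempty ((R ⧸ maximalIdeal R ^ n) ≃
      ((maximalIdeal R ^ j).map (Ideal.Quotient.mk (maximalIdeal R ^ (j + n)))
        : Ideal (R ⧸ maximalIdeal R ^ (j + n)))) := by
  obtain ⟨ϖ, hϖ⟩ := IsDiscreteValuationRing.exists_irreducible R
  have hspan : maximalIdeal R = Ideal.span {ϖ} :=
    (IsDiscreteValuationRing.irreducible_iff_uniformizer ϖ).mp hϖ
  have hne : ϖ ^ j ≠ 0 := pow_ne_zero j hϖ.ne_zero
  set f : R →ₗ[R] R ⧸ maximalIdeal R ^ (j + n) :=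
    (maximalIdeal R ^ (j + n)).mkQ ∘ₗ LinearMap.mulLeft R (ϖ ^ j) with hf
  have hfapp : ∀ r : R, f r = Ideal.Quotient.mk (maximalIdeal R ^ (j + n)) (ϖ ^ j * r) :=
    fun r => rfl
  have hkerf : ∀ x : R, f x = 0 ↔ x ∈ maximalIdeal R ^ n := by
    intro x
    rw [hfapp, Ideal.Quotient.eq_zero_iff_mem, hspan, Ideal.span_singleton_pow,
      Ideal.span_singleton_pow, Ideal.mem_span_singleton, Ideal.mem_span_singleton,
      pow_add]
    exact mul_dvd_mul_iff_left hne
  have hle : maximalIdeal R ^ n ≤ LinearMap.ker f := fun x hx => (hkerf x).mpr hx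
  set φ := Submodule.liftQ (maximalIdeal R ^ n) f hle with hφ
  have hφapp : ∀ r : R, φ (Ideal.Quotient.mk (maximalIdeal R ^ n) r)
      = Ideal.Quotient.mk (maximalIdeal R ^ (j + n)) (ϖ ^ j * r) := fun r => rfl
  have hmem : ∀ x : R ⧸ maximalIdeal R ^ n,
      φ x ∈ (maximalIdeal R ^ j).map (Ideal.Quotient.mk (maximalIdeal R ^ (j + n))) := by
    intro x
    obtain ⟨r, rfl⟩ := Ideal.Quotient.mk_surjective (I := maximalIdeal R ^ n) x
    rw [hφapp]
    refine Ideal.mem_map_of_mem _ ?_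
    rw [hspan, Ideal.span_singleton_pow, Ideal.mem_span_singleton]
    exact dvd_mul_right _ _
  have hinj : Function.Injective φ := by
    rw [← LinearMap.ker_eq_bot, hφ, Submodule.ker_liftQ_eq_bot]
    intro x hx
    exact (hkerf x).mp hx
  refine ⟨Equiv.ofBijective (fun x => (⟨φ x, hmem x⟩ :
      ((maximalIdeal R ^ j).map (Ideal.Quotient.mk (maximalIdeal R ^ (j + n)))
        : Ideal (R ⧸ maximalIdeal R ^ (j + n))))) ⟨?_, ?_⟩⟩
  · intro x y hxy
    exact hinj (congrArg Subtype.val hxy)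
  · rintro ⟨y, hy⟩
    rw [Ideal.mem_map_iff_of_surjective _ Ideal.Quotient.mk_surjective] at hy
    obtain ⟨x, hxI, rfl⟩ := hy
    rw [hspan, Ideal.span_singleton_pow, Ideal.mem_span_singleton] at hxI
    obtain ⟨c, rfl⟩ := hxI
    exact ⟨Ideal.Quotient.mk _ c, Subtype.ext (hφapp c)⟩

lemma card_ideal_map_pow (j n : ℕ) :
    Nat.card ((maximalIdeal R ^ j).map (Ideal.Quotient.mk (maximalIdeal R ^ (j + n)))
        : Ideal (R ⧸ maximalIdeal R ^ (j + n)))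
      = Nat.card (R ⧸ maximalIdeal R ^ n) :=
  (Nat.card_congr (equiv_ideal_map_pow R j n).some).symm

variable [Finite (ResidueField R)]

lemma finite_and_card_quot (n : ℕ) :
    Finite (R ⧸ maximalIdeal R ^ n) ∧
      Nat.card (R ⧸ maximalIdeal R ^ n) = Nat.card (ResidueField R) ^ n := by
  induction n with
  | zero =>
    have hs : Subsingleton (R ⧸ maximalIdeal R ^ 0) := by
      rw [Ideal.Quotient.subsingleton_iff, pow_zero, Ideal.one_eq_top]
    constructor
    · exact Finite.of_subsingleton
    · rw [pow_zero]
      exact Nat.card_eq_one_iff_unique.mpr ⟨hs, ⟨0⟩⟩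
  | succ n ih =>
    obtain ⟨ihfin, ihcard⟩ := ih
    have hle : maximalIdeal R ^ (n + 1) ≤ maximalIdeal R ^ n :=
      Ideal.pow_le_pow_right (Nat.le_succ n)
    set f : R ⧸ maximalIdeal R ^ (n + 1) →+* R ⧸ maximalIdeal R ^ n :=
      Ideal.Quotient.factor hle with hfdef
    have hfmk : ∀ r : R, f (Ideal.Quotient.mk _ r) = Ideal.Quotient.mk _ r := fun r =>
      Ideal.Quotient.factor_mk hle r
    have hfsurj : Function.Surjective f := by
      intro y
      obtain ⟨r, rfl⟩ := Ideal.Quotient.mk_surjective y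
      exact ⟨Ideal.Quotient.mk _ r, hfmk r⟩
    set g := f.toAddMonoidHom with hgdef
    have hker_set : ((AddMonoidHom.ker g : AddSubgroup (R ⧸ maximalIdeal R ^ (n + 1))) : Set _)
        = ((((maximalIdeal R ^ n).map (Ideal.Quotient.mk (maximalIdeal R ^ (n + 1))))
          : Ideal (R ⧸ maximalIdeal R ^ (n + 1))) : Set (R ⧸ maximalIdeal R ^ (n + 1))) := by
      ext x
      obtain ⟨r, rfl⟩ := Ideal.Quotient.mk_surjective x
      constructor
      · intro hx
        have h0 : Ideal.Quotient.mk (maximalIdeal R ^ n) r = 0 := by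
          have := AddMonoidHom.mem_ker.mp hx
          rwa [hgdef] at this
        rw [Ideal.Quotient.eq_zero_iff_mem] at h0
        exact Ideal.mem_map_of_mem _ h0
      · intro hx
        rw [SetLike.mem_coe,
          Ideal.mem_map_iff_of_surjective _ Ideal.Quotient.mk_surjective] at hx
        obtain ⟨x, hxI, hxr⟩ := hx
        refine AddMonoidHom.mem_ker.mpr ?_
        show f (Ideal.Quotient.mk _ r) = 0
        rw [hfmk, Ideal.Quotient.eq_zero_iff_mem]
        have hst : x - r ∈ maximalIdeal R ^ (n + 1) :=
          Ideal.Quotient.eq.mp hxr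
        have : r = x - (x - r) := by ring
        rw [this]
        exact Submodule.sub_mem _ hxI (hle hst)
    obtain ⟨eker⟩ := equiv_ideal_map_pow R n 1
    have e1 : (R ⧸ maximalIdeal R ^ 1) ≃ ResidueField R :=
      (Ideal.quotEquivOfEq (by rw [pow_one])).toEquiv
    have ekerset : (AddMonoidHom.ker g) ≃ ResidueField R :=
      ((Equiv.setCongr hker_set).trans eker.symm).trans e1
    have hfinker : Finite (AddMonoidHom.ker g) := Finite.of_equiv _ ekerset.symm
    have equot : (R ⧸ maximalIdeal R ^ (n + 1)) ⧸ AddMonoidHom.ker g ≃ (R ⧸ maximalIdeal R ^ n) :=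
      (QuotientAddGroup.quotientKerEquivOfSurjective g hfsurj).toEquiv
    have hfinquot : Finite ((R ⧸ maximalIdeal R ^ (n + 1)) ⧸ AddMonoidHom.ker g) :=
      Finite.of_equiv _ equot.symm
    have etot : (R ⧸ maximalIdeal R ^ (n + 1)) ≃
        ((R ⧸ maximalIdeal R ^ (n + 1)) ⧸ AddMonoidHom.ker g) × (AddMonoidHom.ker g) :=
      AddSubgroup.addGroupEquivQuotientProdAddSubgroup
    constructor
    · exact Finite.of_equiv _ etot.symm
    · rw [Nat.card_congr etot, Nat.card_prod, Nat.card_congr equot, ihcard,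
        Nat.card_congr ekerset]
      rw [pow_succ]

end DVRQuot

section SmallEquivs

variable {M M' N N' : Type*} [AddCommGroup M] [AddCommGroup N] [AddCommGroup M']
  [AddCommGroup N']

def prodPreimageZeroEquiv (f : M →+ N) (g : M' →+ N') :
    ((f.prodMap g) ⁻¹' ({0} : Set (N × N')) : Set (M × M'))
      ≃ (f ⁻¹' ({0} : Set N)) × (g ⁻¹' ({0} : Set N')) where
  toFun x := ⟨⟨x.1.1, by
      have h : f x.1.1 = 0 := congrArg Prod.fst (x.2 : (f.prodMap g) x.1 = (0 : N × N'))
      simpa using h⟩,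
    ⟨x.1.2, by
      have h : g x.1.2 = 0 := congrArg Prod.snd (x.2 : (f.prodMap g) x.1 = (0 : N × N'))
      simpa using h⟩⟩
  invFun p := ⟨⟨p.1.1, p.2.1⟩, by
    have h1 : f p.1.1 = 0 := p.1.2
    have h2 : g p.2.1 = 0 := p.2.2
    show (f.prodMap g) (p.1.1, p.2.1) = 0
    simp [h1, h2, Prod.ext_iff]⟩
  left_inv x := rfl
  right_inv p := rfl

variable {A B : Type*} [CommRing A] [CommRing B]

def matrixPreimageZeroEquiv (f : A →+* B) :
    (((f.mapMatrix : Matrix (Fin 2) (Fin 2) A →+* Matrix (Fin 2) (Fin 2) B)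
        : Matrix (Fin 2) (Fin 2) A → Matrix (Fin 2) (Fin 2) B) ⁻¹'
        ({0} : Set (Matrix (Fin 2) (Fin 2) B)) : Set (Matrix (Fin 2) (Fin 2) A))
      ≃ (Fin 2 → Fin 2 → (f ⁻¹' ({0} : Set B))) where
  toFun M r s := ⟨M.1 r s, by
    have h : (M.1).map f = 0 := M.2
    have := congrFun (congrFun h r) s
    simpa [Matrix.map_apply] using this⟩
  invFun g := ⟨Matrix.of fun r s => (g r s).1, by
    show (Matrix.of fun r s => ((g r s) : A)).map f = 0
    ext r s
    have h2 : f ((g r s) : A) = 0 := (g r s).2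
    simpa [Matrix.map_apply] using h2⟩
  left_inv M := by
    ext r s
    rfl
  right_inv g := by
    ext r s
    rfl

end SmallEquivs

section Pairs

variable {k : Type*} [Field k] [Finite k]

lemma card_pairs (w : k) (hw : ¬IsSquare w) :
    Nat.card {p : k × k // IsUnit (p.1 * p.1 - w * p.2 * p.2)}
      = Nat.card k * Nat.card k - 1 := by
  have hcond : ∀ p : k × k, IsUnit (p.1 * p.1 - w * p.2 * p.2) ↔ ¬(p = 0) := by
    rintro ⟨a, b⟩
    rw [isUnit_iff_ne_zero]
    constructor
    · intro h hab
      obtain ⟨ha, hb⟩ := Prod.mk_eq_zero.mp hab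
      subst ha; subst hb
      simp at h
    · intro hp h0
      rw [sub_eq_zero] at h0
      rcases eq_or_ne b 0 with rfl | hb
      · have ha : a = 0 := mul_self_eq_zero.mp (by linear_combination h0)
        exact hp (Prod.mk_eq_zero.mpr ⟨ha, rfl⟩)
      · refine hw ⟨a / b, ?_⟩
        field_simp
        first
          | linear_combination h0
          | linear_combination -h0
  have e := Equiv.subtypeEquivRight hcond
  letI := Fintype.ofFinite k
  classical
  rw [Nat.card_congr e, Nat.card_eq_fintype_card, Fintype.card_subtype_compl,
    Fintype.card_subtype_eq (0 : k × k), Fintype.card_prod, Nat.card_eq_fintype_card]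

end Pairs

section QuotRing

open IsLocalRing

variable (R : Type*) [CommRing R] [IsDomain R] [IsDiscreteValuationRing R] (m : ℕ)

lemma pow_le_max : maximalIdeal R ^ (1 + m) ≤ maximalIdeal R :=
  Ideal.pow_le_self (by omega)

noncomputable def θR : (R ⧸ maximalIdeal R ^ (1 + m)) →+* ResidueField R :=
  Ideal.Quotient.lift _ (residue R) (fun a ha => by
    show Ideal.Quotient.mk (maximalIdeal R) a = 0
    rw [Ideal.Quotient.eq_zero_iff_mem]
    exact pow_le_max R m ha)

lemma θR_mk (x : R) : θR R m (Ideal.Quotient.mk _ x) = residue R x := rfl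

lemma θR_surjective : Function.Surjective (θR R m) := by
  intro y
  obtain ⟨r, rfl⟩ := Ideal.Quotient.mk_surjective (I := maximalIdeal R) y
  exact ⟨Ideal.Quotient.mk _ r, rfl⟩

lemma isUnit_of_residue (r : R) (h : IsUnit (residue R r)) : IsUnit r := by
  by_contra hr
  have hmem : r ∈ maximalIdeal R := by
    rw [IsLocalRing.mem_maximalIdeal]
    exact hr
  have : residue R r = 0 := by
    show Ideal.Quotient.mk (maximalIdeal R) r = 0
    rw [Ideal.Quotient.eq_zero_iff_mem]
    exact hmem
  rw [this] at h
  exact not_isUnit_zero h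

lemma isUnit_iff_θR (a : R ⧸ maximalIdeal R ^ (1 + m)) :
    IsUnit a ↔ IsUnit (θR R m a) := by
  constructor
  · exact fun h => h.map (θR R m)
  · obtain ⟨r, rfl⟩ := Ideal.Quotient.mk_surjective a
    rw [θR_mk]
    intro h
    exact (isUnit_of_residue R r h).map (Ideal.Quotient.mk _)

lemma mk_pow_local (x : R)
    (h : IsUnit (Ideal.Quotient.mk (maximalIdeal R ^ (1 + m)) x)) : IsUnit x := by
  rw [isUnit_iff_θR, θR_mk] at h
  exact isUnit_of_residue R x h

lemma card_θR_zero [Finite (ResidueField R)] :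
    Nat.card ((θR R m) ⁻¹' ({0} : Set (ResidueField R))) = Nat.card (ResidueField R) ^ m := by
  have hset : (θR R m) ⁻¹' ({0} : Set (ResidueField R))
      = (((maximalIdeal R ^ 1).map (Ideal.Quotient.mk (maximalIdeal R ^ (1 + m)))
          : Ideal (R ⧸ maximalIdeal R ^ (1 + m))) : Set (R ⧸ maximalIdeal R ^ (1 + m))) := by
    ext a
    obtain ⟨r, rfl⟩ := Ideal.Quotient.mk_surjective a
    simp only [Set.mem_preimage, Set.mem_singleton_iff, θR_mk, SetLike.mem_coe]
    constructor
    · intro h0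
      have hr : r ∈ maximalIdeal R := by
        exact (residue_eq_zero_iff r).mp h0
      exact Ideal.mem_map_of_mem _ (by rwa [pow_one])
    · intro h
      rw [Ideal.mem_map_iff_of_surjective _ Ideal.Quotient.mk_surjective] at h
      obtain ⟨x, hxI, hxr⟩ := h
      rw [pow_one] at hxI
      have hsub : x - r ∈ maximalIdeal R ^ (1 + m) := Ideal.Quotient.eq.mp hxr
      have hr : r ∈ maximalIdeal R := by
        have : r = x - (x - r) := by ring
        rw [this]
        exact Submodule.sub_mem _ hxI (pow_le_max R m hsub)
      show Ideal.Quotient.mk (maximalIdeal R) r = 0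
      rw [Ideal.Quotient.eq_zero_iff_mem]
      exact hr
  rw [hset]
  exact (card_ideal_map_pow R 1 m).trans (finite_and_card_quot R m).2

lemma finiteA [Finite (ResidueField R)] : Finite (R ⧸ maximalIdeal R ^ (1 + m)) :=
  (finite_and_card_quot R (1 + m)).1

end QuotRing

section BigCounts

open IsLocalRing

variable (R : Type*) [CommRing R] [IsDomain R] [IsDiscreteValuationRing R] (m : ℕ)
  [Finite (ResidueField R)]

lemma card_GL_quot :
    Nat.card (GL (Fin 2) (R ⧸ maximalIdeal R ^ (1 + m)))
      = Nat.card (GL (Fin 2) (ResidueField R))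
        * ((Nat.card (ResidueField R) ^ m) ^ 2) ^ 2 := by
  set A := R ⧸ maximalIdeal R ^ (1 + m)
  have hiff : ∀ M : Matrix (Fin 2) (Fin 2) A, IsUnit M ↔ IsUnit ((θR R m).mapMatrix M) := by
    intro M
    rw [Matrix.isUnit_iff_isUnit_det, Matrix.isUnit_iff_isUnit_det, ← RingHom.map_det,
      ← isUnit_iff_θR]
  have hset : {M : Matrix (Fin 2) (Fin 2) A | IsUnit M}
      = ((θR R m).mapMatrix : Matrix (Fin 2) (Fin 2) A →+* Matrix (Fin 2) (Fin 2) (ResidueField R)).toAddMonoidHom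
        ⁻¹' {N : Matrix (Fin 2) (Fin 2) (ResidueField R) | IsUnit N} := by
    ext M
    exact hiff M
  have hsurj : Function.Surjective
      (((θR R m).mapMatrix : Matrix (Fin 2) (Fin 2) A →+* Matrix (Fin 2) (Fin 2) (ResidueField R)).toAddMonoidHom) := by
    intro N
    refine ⟨Matrix.of fun r s => Function.surjInv (θR_surjective R m) (N r s), ?_⟩
    show (Matrix.of fun r s => Function.surjInv (θR_surjective R m) (N r s)).map (θR R m) = N
    ext r s
    simp [Matrix.map_apply, Function.surjInv_eq (θR_surjective R m)]
  have h1 : Nat.card (GL (Fin 2) A)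
      = Nat.card {M : Matrix (Fin 2) (Fin 2) A // IsUnit M} :=
    Nat.card_congr (unitsEquivIsUnit _)
  have h2 : Nat.card {M : Matrix (Fin 2) (Fin 2) A // IsUnit M}
      = Nat.card {N : Matrix (Fin 2) (Fin 2) (ResidueField R) | IsUnit N}
        * Nat.card (((θR R m).mapMatrix : Matrix (Fin 2) (Fin 2) A →+* Matrix (Fin 2) (Fin 2) (ResidueField R)).toAddMonoidHom
            ⁻¹' ({0} : Set (Matrix (Fin 2) (Fin 2) (ResidueField R)))) := by
    rw [show {M : Matrix (Fin 2) (Fin 2) A // IsUnit M}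
        = ↥{M : Matrix (Fin 2) (Fin 2) A | IsUnit M} from rfl]
    rw [Nat.card_congr (Equiv.setCongr hset)]
    exact card_preimage _ hsurj _
  have h3 : Nat.card {N : Matrix (Fin 2) (Fin 2) (ResidueField R) | IsUnit N}
      = Nat.card (GL (Fin 2) (ResidueField R)) :=
    (Nat.card_congr (unitsEquivIsUnit (Matrix (Fin 2) (Fin 2) (ResidueField R)))).symm
  have h4 : Nat.card (((θR R m).mapMatrix : Matrix (Fin 2) (Fin 2) A →+* Matrix (Fin 2) (Fin 2) (ResidueField R)).toAddMonoidHom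
      ⁻¹' ({0} : Set (Matrix (Fin 2) (Fin 2) (ResidueField R))))
      = ((Nat.card (ResidueField R) ^ m) ^ 2) ^ 2 := by
    have e0 : Nat.card (((θR R m).mapMatrix : Matrix (Fin 2) (Fin 2) A →+* Matrix (Fin 2) (Fin 2) (ResidueField R)).toAddMonoidHom
        ⁻¹' ({0} : Set (Matrix (Fin 2) (Fin 2) (ResidueField R))))
        = Nat.card (Fin 2 → Fin 2 → ((θR R m) ⁻¹' ({0} : Set (ResidueField R)))) :=
      Nat.card_congr (matrixPreimageZeroEquiv (θR R m))
    rw [e0, Nat.card_fun, Nat.card_fun, Nat.card_eq_fintype_card (α := Fin 2),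
      Fintype.card_fin, card_θR_zero]
  rw [h1, h2, h3, h4]

lemma card_torus_quot (u : Rˣ) :
    Nat.card (torusSubgroup (R ⧸ maximalIdeal R ^ (1 + m))
        (Units.map ((Ideal.Quotient.mk (maximalIdeal R ^ (1 + m))) : R →* R ⧸ maximalIdeal R ^ (1 + m)) u))
      = Nat.card {p : ResidueField R × ResidueField R //
          IsUnit (p.1 * p.1 - (residue R u) * p.2 * p.2)}
        * (Nat.card (ResidueField R) ^ m) ^ 2 := by
  set A := R ⧸ maximalIdeal R ^ (1 + m)
  set uA := Units.map ((Ideal.Quotient.mk (maximalIdeal R ^ (1 + m))) : R →* A) u with huA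
  have h1 : Nat.card (torusSubgroup A uA)
      = Nat.card {p : A × A // IsUnit (p.1 * p.1 - (uA : A) * p.2 * p.2)} :=
    (Nat.card_congr (pairsEquivTorus A uA)).symm
  have hiff : ∀ p : A × A, IsUnit (p.1 * p.1 - (uA : A) * p.2 * p.2)
      ↔ IsUnit (((θR R m) p.1) * ((θR R m) p.1) - (residue R u) * ((θR R m) p.2) * ((θR R m) p.2)) := by
    intro p
    rw [isUnit_iff_θR R m]
    have : (θR R m) (p.1 * p.1 - (uA : A) * p.2 * p.2)
        = ((θR R m) p.1) * ((θR R m) p.1) - (residue R u) * ((θR R m) p.2) * ((θR R m) p.2) := by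
      have hu : (θR R m) (uA : A) = residue R ↑u := θR_mk R m ↑u
      rw [map_sub, _root_.map_mul, _root_.map_mul, _root_.map_mul, hu]
    rw [this]
  have hset : {p : A × A | IsUnit (p.1 * p.1 - (uA : A) * p.2 * p.2)}
      = ((θR R m).toAddMonoidHom.prodMap (θR R m).toAddMonoidHom) ⁻¹'
          {p : ResidueField R × ResidueField R |
            IsUnit (p.1 * p.1 - (residue R u) * p.2 * p.2)} := by
    ext p
    exact hiff p
  have hsurj : Function.Surjective ((θR R m).toAddMonoidHom.prodMap (θR R m).toAddMonoidHom) := by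
    rintro ⟨x, y⟩
    obtain ⟨a, ha⟩ := θR_surjective R m x
    obtain ⟨b, hb⟩ := θR_surjective R m y
    exact ⟨(a, b), by simp [ha, hb, Prod.ext_iff]⟩
  have h2 := card_preimage ((θR R m).toAddMonoidHom.prodMap (θR R m).toAddMonoidHom) hsurj
    {p : ResidueField R × ResidueField R | IsUnit (p.1 * p.1 - (residue R u) * p.2 * p.2)}
  have h3 : Nat.card (((θR R m).toAddMonoidHom.prodMap (θR R m).toAddMonoidHom) ⁻¹'
      ({0} : Set (ResidueField R × ResidueField R)))
      = (Nat.card (ResidueField R) ^ m) ^ 2 := by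
    have e0 : Nat.card (((θR R m).toAddMonoidHom.prodMap (θR R m).toAddMonoidHom) ⁻¹'
        ({0} : Set (ResidueField R × ResidueField R)))
        = Nat.card (((θR R m) ⁻¹' ({0} : Set (ResidueField R)))
            × ((θR R m) ⁻¹' ({0} : Set (ResidueField R)))) :=
      Nat.card_congr (prodPreimageZeroEquiv (θR R m).toAddMonoidHom (θR R m).toAddMonoidHom)
    rw [e0, Nat.card_prod, card_θR_zero]
    ring
  rw [h1, show {p : A × A // IsUnit (p.1 * p.1 - (uA : A) * p.2 * p.2)}
      = ↥{p : A × A | IsUnit (p.1 * p.1 - (uA : A) * p.2 * p.2)} from rfl,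
    Nat.card_congr (Equiv.setCongr hset), h2, h3]
  rfl

end BigCounts

/-- Let `R` be a discrete valuation ring with finite residue field of odd cardinality `q`,
and let `u ∈ Rˣ` reduce to a nonsquare in the residue field.  For every `i ≥ 1` the set
`T·Kⁱ` is a subgroup of `GL₂(R)`, of index `(q² − q)·q^(2(i−1))`. -/
theorem index_unramifiedTorus_mul_congruenceSubgroup (R : Type*) [CommRing R] [IsDomain R]
    [IsDiscreteValuationRing R] [Finite (ResidueField R)]
    (q : ℕ) (hq : Nat.card (ResidueField R) = q) (hodd : Odd q)
    (u : Rˣ) (hu : ¬IsSquare (residue R (u : R)))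
    (i : ℕ) (hi : 1 ≤ i) :
    ∃ H : Subgroup (GL (Fin 2) R),
      (H : Set (GL (Fin 2) R))
        = unramifiedTorus R u * (congruenceSubgroup R (maximalIdeal R ^ i) : Set (GL (Fin 2) R)) ∧
      H.index = (q ^ 2 - q) * q ^ (2 * (i - 1)) := by
  subst hq
  obtain ⟨m, rfl⟩ : ∃ m, i = 1 + m := ⟨i - 1, by omega⟩
  set Q := Nat.card (ResidueField R) with hQ
  set π : GL (Fin 2) R →* GL (Fin 2) (R ⧸ maximalIdeal R ^ (1 + m)) :=
    Matrix.GeneralLinearGroup.map (Ideal.Quotient.mk (maximalIdeal R ^ (1 + m))) with hπ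
  have hπsurj : Function.Surjective π :=
    GL_map_surjective _ Ideal.Quotient.mk_surjective (mk_pow_local R m)
  have hπker : π.ker = congruenceSubgroup R (maximalIdeal R ^ (1 + m)) :=
    ker_GL_map _ (fun x => Ideal.Quotient.eq_zero_iff_mem)
  refine ⟨Subgroup.comap π (Subgroup.map π (torusSubgroup R u)), ?_, ?_⟩
  · rw [Subgroup.comap_map_eq, Subgroup.mul_normal, hπker, torusSubgroup_coe]
  · rw [Subgroup.index_comap_of_surjective _ hπsurj,
      map_torusSubgroup _ Ideal.Quotient.mk_surjective (mk_pow_local R m) u]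
    haveI : Finite (R ⧸ maximalIdeal R ^ (1 + m)) := finiteA R m
    haveI : Finite (GL (Fin 2) (R ⧸ maximalIdeal R ^ (1 + m))) := inferInstance
    have hIC := Subgroup.index_mul_card
      (G := GL (Fin 2) (R ⧸ maximalIdeal R ^ (1 + m)))
      (torusSubgroup (R ⧸ maximalIdeal R ^ (1 + m))
        (Units.map ((Ideal.Quotient.mk (maximalIdeal R ^ (1 + m))) : R →* _) u))
    rw [card_GL_quot R m, card_torus_quot R m u] at hIC
    have hpairs : Nat.card {p : ResidueField R × ResidueField R //
        IsUnit (p.1 * p.1 - (residue R (u : R)) * p.2 * p.2)} = Q * Q - 1 :=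
      card_pairs (residue R (u : R)) hu
    letI := Fintype.ofFinite (ResidueField R)
    have hglk : Nat.card (GL (Fin 2) (ResidueField R))
        = (Q ^ 2 - 1) * (Q ^ 2 - Q) := by
      rw [Matrix.card_GL_field, Fin.prod_univ_two]
      rw [hQ, Nat.card_eq_fintype_card]
      norm_num
    rw [hpairs, hglk] at hIC
    have h1Q : 1 < Q := Finite.one_lt_card
    have hpos : 0 < (Q * Q - 1) * (Q ^ m) ^ 2 := by
      have ha : 0 < Q * Q - 1 := by
        have : 1 < Q * Q := by nlinarith
        omega
      have hc : 0 < Q ^ m := pow_pos (by omega) m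
      positivity
    have hexp : 1 + m - 1 = m := by omega
    rw [hexp]
    refine Nat.eq_of_mul_eq_mul_right hpos ?_
    rw [hIC]
    have hQ2 : Q ^ (2 * m) = (Q ^ m) ^ 2 := by
      rw [mul_comm 2 m, pow_mul]
    rw [hQ2]
    have hQQ : Q * Q - 1 = Q ^ 2 - 1 := by
      rw [pow_two]
    rw [hQQ]
    generalize (Q ^ 2 - 1) = a
    generalize (Q ^ 2 - Q) = b
    generalize (Q ^ m) = c
    ring
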